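/- Let N ≥ 1 be an integer and λ_1, …, λ_N real numbers, and let W(λ) be the 2N×2N matrix whose (k, 2i−1) entry is λ_i^{k−1} and whose (k, 2i) entry is (k−1)λ_i^{k−2} for 1 ≤ k ≤ 2N and 1 ≤ i ≤ N (with the convention that (k−1)λ^{k−2} = 0 when k = 1). Then det(W(λ)) = ∏_{1 ≤ i < j ≤ N} (λ_i − λ_j)^4. -/

import Mathlib

/-- The confluent Vandermonde matrix: for `1 ≤ k ≤ 2N` and `1 ≤ i ≤ N` (here 0-indexed),
the `(k, 2i-1)` entry is `λ i ^ (k-1)` and the `(k, 2i)` entry is `(k-1) * λ i ^ (k-2)`. -/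
def confluentVandermonde (N : ℕ) (lam : Fin N → ℝ) : Matrix (Fin (2 * N)) (Fin (2 * N)) ℝ :=
  Matrix.of fun k j =>
    if (j : ℕ) % 2 = 0 then lam ⟨(j : ℕ) / 2, Nat.div_lt_of_lt_mul j.isLt⟩ ^ (k : ℕ)
    else (k : ℝ) * lam ⟨(j : ℕ) / 2, Nat.div_lt_of_lt_mul j.isLt⟩ ^ ((k : ℕ) - 1)

namespace CVAux

open Polynomial Finset

/-- Pairing equivalence `Fin N × Fin 2 ≃ Fin (2*N)`, `(i,p) ↦ 2i+p`. -/
def pe (N : ℕ) : Fin N × Fin 2 ≃ Fin (2 * N) where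
  toFun x := ⟨2 * x.1 + x.2, by have := x.1.isLt; have := x.2.isLt; omega⟩
  invFun r := (⟨(r : ℕ) / 2, Nat.div_lt_of_lt_mul r.isLt⟩,
    ⟨(r : ℕ) % 2, Nat.mod_lt _ (by norm_num)⟩)
  left_inv := by
    rintro ⟨⟨i, hi⟩, ⟨p, hp⟩⟩
    ext
    · simp only; omega
    · simp only; omega
  right_inv := by
    rintro ⟨r, hr⟩
    ext
    simp only
    omega

@[simp] lemma pe_val (N : ℕ) (i : Fin N) (p : Fin 2) :
    ((pe N (i, p) : Fin (2 * N)) : ℕ) = 2 * i + p := rfl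

lemma pe_lt_pe (N : ℕ) (x y : Fin N × Fin 2) :
    pe N x < pe N y ↔ (x.1 < y.1 ∨ (x.1 = y.1 ∧ x.2 < y.2)) := by
  obtain ⟨⟨i, hi⟩, ⟨p, hp⟩⟩ := x
  obtain ⟨⟨j, hj⟩, ⟨q, hq⟩⟩ := y
  simp only [Fin.lt_def, Fin.ext_iff, pe_val]
  omega

/-- Splitting a product over pairs `a < b` in `Fin (2N)` according to blocks. -/
theorem prod_split {M : Type*} [CommMonoid M] (N : ℕ) (f : Fin (2 * N) → Fin (2 * N) → M) :
    (∏ a : Fin (2 * N), ∏ b ∈ Ioi a, f a b)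
      = (∏ i : Fin N, f (pe N (i, 0)) (pe N (i, 1)))
        * ∏ i : Fin N, ∏ j ∈ Ioi i,
            (f (pe N (i, 0)) (pe N (j, 0)) * f (pe N (i, 0)) (pe N (j, 1))
              * f (pe N (i, 1)) (pe N (j, 0)) * f (pe N (i, 1)) (pe N (j, 1))) := by
  have hIoi : ∀ (a : Fin (2 * N)), ∏ b ∈ Ioi a, f a b
      = ∏ b : Fin (2 * N), if a < b then f a b else 1 := by
    intro a
    rw [← Finset.prod_filter]
    congr 1
    ext b
    simp
  calc
    (∏ a : Fin (2 * N), ∏ b ∈ Ioi a, f a b)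
        = ∏ a : Fin (2 * N), ∏ b : Fin (2 * N), if a < b then f a b else 1 := by
          simp_rw [hIoi]
    _ = ∏ x : Fin N × Fin 2, ∏ y : Fin N × Fin 2,
          if pe N x < pe N y then f (pe N x) (pe N y) else 1 := by
          rw [← Equiv.prod_comp (pe N)]
          refine Finset.prod_congr rfl fun x _ => ?_
          rw [← Equiv.prod_comp (pe N)]
    _ = ∏ i : Fin N, ∏ p : Fin 2, ∏ j : Fin N, ∏ q : Fin 2,
          if (i < j ∨ (i = j ∧ p < q)) then f (pe N (i, p)) (pe N (j, q)) else 1 := by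
          rw [Fintype.prod_prod_type]
          refine Finset.prod_congr rfl fun i _ => ?_
          refine Finset.prod_congr rfl fun p _ => ?_
          rw [Fintype.prod_prod_type]
          simp_rw [pe_lt_pe]
    _ = ∏ i : Fin N, ∏ j : Fin N, ∏ p : Fin 2, ∏ q : Fin 2,
          if (i < j ∨ (i = j ∧ p < q)) then f (pe N (i, p)) (pe N (j, q)) else 1 := by
          refine Finset.prod_congr rfl fun i _ => ?_
          exact Finset.prod_comm
    _ = _ := by
          have hstep : ∀ i : Fin N,
              (∏ j : Fin N, ∏ p : Fin 2, ∏ q : Fin 2,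
                if (i < j ∨ (i = j ∧ p < q)) then f (pe N (i, p)) (pe N (j, q)) else 1)
              = f (pe N (i, 0)) (pe N (i, 1))
                * ∏ j ∈ Ioi i,
                  (f (pe N (i, 0)) (pe N (j, 0)) * f (pe N (i, 0)) (pe N (j, 1))
                    * f (pe N (i, 1)) (pe N (j, 0)) * f (pe N (i, 1)) (pe N (j, 1))) := by
            intro i
            have h1 : (∏ j : Fin N, ∏ p : Fin 2, ∏ q : Fin 2,
                if (i < j ∨ (i = j ∧ p < q)) then f (pe N (i, p)) (pe N (j, q)) else 1)
                = ∏ j ∈ Ici i, ∏ p : Fin 2, ∏ q : Fin 2,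
                  if (i < j ∨ (i = j ∧ p < q)) then f (pe N (i, p)) (pe N (j, q)) else 1 := by
              symm
              apply Finset.prod_subset (Finset.subset_univ _)
              intro j _ hj
              have hji : j < i := by
                simpa [Finset.mem_Ici, not_le] using hj
              have : ¬ (i < j) := by omega
              have h2 : ¬ (i = j) := by omega
              simp [this, h2]
            rw [h1, ← Finset.Ioi_insert, Finset.prod_insert Finset.notMem_Ioi_self]
            congr 1
            · rw [Fin.prod_univ_two, Fin.prod_univ_two, Fin.prod_univ_two]
              have h01 : (0 : Fin 2) < 1 := by decide
              simp [lt_irrefl, h01]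
            · refine Finset.prod_congr rfl fun j hj => ?_
              have hij : i < j := Finset.mem_Ioi.mp hj
              rw [Fin.prod_univ_two, Fin.prod_univ_two, Fin.prod_univ_two]
              simp [hij]
              rw [← mul_assoc]
          simp_rw [hstep]
          rw [Finset.prod_mul_distrib]

variable (N : ℕ) (lam : Fin N → ℝ)

/-- Interleaved values `λ₀, λ₀+X, λ₁, λ₁+X, …` in `ℝ[X]`. -/
noncomputable def mu : Fin (2 * N) → ℝ[X] := fun r =>
  C (lam ⟨(r : ℕ) / 2, Nat.div_lt_of_lt_mul r.isLt⟩) + if (r : ℕ) % 2 = 0 then 0 else X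

/-- Polynomial version of the (transposed) confluent Vandermonde matrix. -/
noncomputable def cvA : Matrix (Fin (2 * N)) (Fin (2 * N)) ℝ[X] :=
  Matrix.of fun r s =>
    if (r : ℕ) % 2 = 0 then (C (lam ⟨(r : ℕ) / 2, Nat.div_lt_of_lt_mul r.isLt⟩)) ^ (s : ℕ)
    else ∑ m ∈ range (s : ℕ),
      (C (lam ⟨(r : ℕ) / 2, Nat.div_lt_of_lt_mul r.isLt⟩) + X) ^ m
        * (C (lam ⟨(r : ℕ) / 2, Nat.div_lt_of_lt_mul r.isLt⟩)) ^ ((s : ℕ) - 1 - m)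

/-- Unit lower-triangular row-operation matrix. -/
noncomputable def G : Matrix (Fin (2 * N)) (Fin (2 * N)) ℝ[X] :=
  Matrix.of fun r t =>
    (if t = r then 1 else 0) + (if (r : ℕ) % 2 = 1 ∧ (t : ℕ) + 1 = (r : ℕ) then 1 else 0)

noncomputable def dvec : Fin (2 * N) → ℝ[X] := fun r => if (r : ℕ) % 2 = 0 then 1 else X

lemma key : Matrix.vandermonde (mu N lam) = G N * (Matrix.diagonal (dvec N) * cvA N lam) := by
  refine Matrix.ext fun r s => ?_
  rw [Matrix.mul_apply]
  have hd : ∀ t : Fin (2 * N),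
      (Matrix.diagonal (dvec N) * cvA N lam) t s = dvec N t * cvA N lam t s := fun t => by
    rw [Matrix.diagonal_mul]
  simp_rw [hd, G, Matrix.of_apply, add_mul, Finset.sum_add_distrib, ite_mul, one_mul, zero_mul,
    Finset.sum_ite_eq' Finset.univ r]
  simp only [Finset.mem_univ, if_true]
  rcases Nat.even_or_odd (r : ℕ) with hr | hr
  · have hr0 : (r : ℕ) % 2 = 0 := Nat.even_iff.mp hr
    have hzero : ∀ t : Fin (2 * N),
        (if (r : ℕ) % 2 = 1 ∧ (t : ℕ) + 1 = (r : ℕ) then dvec N t * cvA N lam t s else 0) = 0 := by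
      intro t; rw [if_neg]; omega
    rw [Finset.sum_congr rfl fun t _ => hzero t, Finset.sum_const_zero, add_zero]
    simp [Matrix.vandermonde, mu, cvA, dvec, hr0]
  · have hr1 : (r : ℕ) % 2 = 1 := Nat.odd_iff.mp hr
    have hrpos : 1 ≤ (r : ℕ) := by omega
    set t₀ : Fin (2 * N) := ⟨(r : ℕ) - 1, by omega⟩ with ht₀
    have hcond : ∀ t : Fin (2 * N),
        ((r : ℕ) % 2 = 1 ∧ (t : ℕ) + 1 = (r : ℕ)) ↔ t = t₀ := by
      intro t; simp only [Fin.ext_iff, ht₀]; omega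
    simp_rw [hcond]
    rw [Finset.sum_ite_eq' Finset.univ t₀]
    simp only [Finset.mem_univ, if_true]
    have ht₀even : (t₀ : ℕ) % 2 = 0 := by simp only [ht₀]; omega
    have hidx : (⟨(t₀ : ℕ) / 2, Nat.div_lt_of_lt_mul t₀.isLt⟩ : Fin N)
        = ⟨(r : ℕ) / 2, Nat.div_lt_of_lt_mul r.isLt⟩ := by
      simp only [Fin.ext_iff, ht₀]; omega
    rw [Matrix.vandermonde]
    simp only [mu, cvA, dvec, Matrix.of_apply, hr1, ht₀even, hidx,
      if_neg (by omega : ¬ (r : ℕ) % 2 = 0), if_pos ht₀even, one_mul, Nat.one_ne_zero,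
      if_false, if_true]
    set a : ℝ[X] := C (lam ⟨(r : ℕ) / 2, Nat.div_lt_of_lt_mul r.isLt⟩)
    have hgeom := geom_sum₂_mul (a + X) a (s : ℕ)
    have hXa : a + X - a = X := by ring
    rw [hXa] at hgeom
    rw [mul_comm X _, hgeom]
    ring

lemma detG : (G N).det = 1 := by
  have h : (G N).BlockTriangular OrderDual.toDual := by
    intro i j hij
    have hij' : (i : ℕ) < (j : ℕ) := hij
    have h1 : ¬ (j = i) := by simp only [Fin.ext_iff]; omega
    have h2 : ¬ ((i : ℕ) % 2 = 1 ∧ (j : ℕ) + 1 = (i : ℕ)) := by omega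
    simp [G, h1, h2]
  rw [Matrix.det_of_lowerTriangular _ h]
  refine Finset.prod_eq_one fun i _ => ?_
  have h2 : ¬ ((i : ℕ) % 2 = 1 ∧ (i : ℕ) + 1 = (i : ℕ)) := by omega
  simp [G, h2]

lemma prod_dvec : ∏ r, dvec N r = X ^ N := by
  calc ∏ r, dvec N r = ∏ x : Fin N × Fin 2, dvec N (pe N x) := (Equiv.prod_comp (pe N) _).symm
    _ = ∏ i : Fin N, ∏ p : Fin 2, dvec N (pe N (i, p)) := Fintype.prod_prod_type _
    _ = X ^ N := by
        have h : ∀ i : Fin N, ∏ p : Fin 2, dvec N (pe N (i, p)) = X := by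
          intro i
          rw [Fin.prod_univ_two]
          have h0 : ((pe N (i, 0) : Fin (2 * N)) : ℕ) % 2 = 0 := by
            rw [pe_val]; omega
          have h1 : ¬ ((pe N (i, 1) : Fin (2 * N)) : ℕ) % 2 = 0 := by
            rw [pe_val]; omega
          simp only [dvec]
          rw [if_pos h0, if_neg h1, one_mul]
        simp_rw [h]
        simp
end CVAux

open Matrix Polynomial Finset CVAux in
theorem stmt_2 (N : ℕ) (hN : 1 ≤ N) (lam : Fin N → ℝ) :
    (confluentVandermonde N lam).det
      = ∏ i : Fin N, ∏ j ∈ Finset.Ioi i, (lam i - lam j) ^ 4 := by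
  classical
  have hpe0 : ∀ i : Fin N, ((pe N (i, 0) : Fin (2 * N)) : ℕ) = 2 * i := by
    intro i; rw [pe_val]; rfl
  have hpe1 : ∀ i : Fin N, ((pe N (i, 1) : Fin (2 * N)) : ℕ) = 2 * i + 1 := by
    intro i; rw [pe_val]; rfl
  have hmu0 : ∀ i : Fin N, mu N lam (pe N (i, 0)) = C (lam i) := by
    intro i
    have h0 : ((pe N (i, 0) : Fin (2 * N)) : ℕ) % 2 = 0 := by rw [hpe0]; omega
    have hidx : (⟨((pe N (i, 0) : Fin (2 * N)) : ℕ) / 2,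
        Nat.div_lt_of_lt_mul (pe N (i, 0)).isLt⟩ : Fin N) = i := by
      simp only [Fin.ext_iff, hpe0]; omega
    simp only [mu]
    rw [hidx, if_pos h0, add_zero]
  have hmu1 : ∀ i : Fin N, mu N lam (pe N (i, 1)) = C (lam i) + X := by
    intro i
    have h1 : ¬ ((pe N (i, 1) : Fin (2 * N)) : ℕ) % 2 = 0 := by rw [hpe1]; omega
    have hidx : (⟨((pe N (i, 1) : Fin (2 * N)) : ℕ) / 2,
        Nat.div_lt_of_lt_mul (pe N (i, 1)).isLt⟩ : Fin N) = i := by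
      simp only [Fin.ext_iff, hpe1]; omega
    simp only [mu]
    rw [hidx, if_neg h1]
  -- the polynomial `Q`
  set Q : ℝ[X] := ∏ i : Fin N, ∏ j ∈ Ioi i,
    ((C (lam j) - C (lam i)) * (C (lam j) + X - C (lam i))
      * (C (lam j) - (C (lam i) + X)) * ((C (lam j) + X) - (C (lam i) + X))) with hQdef
  have hdetV : (Matrix.vandermonde (mu N lam)).det = X ^ N * (cvA N lam).det := by
    rw [key, Matrix.det_mul, Matrix.det_mul, detG, Matrix.det_diagonal, prod_dvec, one_mul]
  have hdetV' : (Matrix.vandermonde (mu N lam)).det = X ^ N * Q := by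
    rw [Matrix.det_vandermonde]
    rw [prod_split N (fun a b => mu N lam b - mu N lam a)]
    refine congr_arg₂ (· * ·) ?_ ?_
    · calc (∏ i : Fin N, (mu N lam (pe N (i, 1)) - mu N lam (pe N (i, 0))))
          = ∏ _i : Fin N, X := by
            refine Finset.prod_congr rfl fun i _ => ?_
            rw [hmu0, hmu1]; ring
        _ = X ^ N := by simp
    · refine Finset.prod_congr rfl fun i _ => Finset.prod_congr rfl fun j _ => ?_
      rw [hmu0, hmu0, hmu1, hmu1]
  have hdetA : (cvA N lam).det = Q := by
    have hX : (X : ℝ[X]) ^ N ≠ 0 := pow_ne_zero _ X_ne_zero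
    exact mul_left_cancel₀ hX (hdetV ▸ hdetV')
  -- evaluation at 0
  have hmap : (cvA N lam).map (evalRingHom 0) = (confluentVandermonde N lam)ᵀ := by
    refine Matrix.ext fun r s => ?_
    simp only [Matrix.map_apply, Matrix.transpose_apply, cvA, confluentVandermonde,
      Matrix.of_apply, coe_evalRingHom]
    by_cases hr : (r : ℕ) % 2 = 0
    · simp [hr]
    · simp only [hr, if_false]
      set a : ℝ := lam ⟨(r : ℕ) / 2, Nat.div_lt_of_lt_mul r.isLt⟩
      rw [eval_finset_sum]
      have hterm : ∀ m ∈ range (s : ℕ),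
          eval 0 ((C a + X) ^ m * (C a) ^ ((s : ℕ) - 1 - m)) = a ^ ((s : ℕ) - 1) := by
        intro m hm
        have hm' : m < (s : ℕ) := Finset.mem_range.mp hm
        simp only [eval_mul, eval_pow, eval_add, eval_C, eval_X, add_zero]
        rw [← pow_add]
        congr 1
        omega
      rw [Finset.sum_congr rfl hterm, Finset.sum_const, Finset.card_range, nsmul_eq_mul]
  have : (confluentVandermonde N lam).det = eval 0 Q := by
    rw [← Matrix.det_transpose, ← hmap, ← RingHom.mapMatrix_apply, ← RingHom.map_det, hdetA,
      coe_evalRingHom]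
  rw [this, hQdef, eval_prod]
  refine Finset.prod_congr rfl fun i _ => ?_
  rw [eval_prod]
  refine Finset.prod_congr rfl fun j _ => ?_
  simp only [eval_mul, eval_add, eval_sub, eval_C, eval_X]
  ring
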